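/- Let η > 0 and s ∈ ℂ with 1 + 4ηs ≠ 0, and set λ₁ = (1 + √(1+4ηs))/(2η) and λ₂ = (1 − √(1+4ηs))/(2η), where √ denotes the principal branch of the complex square root. Let y : ℝ → ℂ be twice differentiable with s·y(x) + y′(x) − η·y″(x) = 0 for all x ∈ [0,1] and y′(1) = 0. Then (λ₁·e^{−λ₂} − λ₂·e^{−λ₁})·y(1) = (λ₁ − λ₂)·y(0). -/

import Mathlib

lemma stmt_15_aux (η : ℝ) (hη : 0 < η) (s : ℂ) (l m : ℂ)
    (hsum : l + m = 1 / (η : ℂ)) (hprod : l * m = -s / (η : ℂ))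
    (y : ℝ → ℂ)
    (hy : Differentiable ℝ y) (hy' : Differentiable ℝ (deriv y))
    (hode : ∀ x ∈ Set.Icc (0 : ℝ) 1,
      s * y x + deriv y x - (η : ℂ) * deriv (deriv y) x = 0) :
    Complex.exp (-m) * (deriv y 1 - l * y 1) = deriv y 0 - l * y 0 := by
  have hηc : (η : ℂ) ≠ 0 := by exact_mod_cast hη.ne'
  set g : ℝ → ℂ := fun x => Complex.exp (-m * x) * (deriv y x - l * y x) with hg
  have hcont : ContinuousOn g (Set.Icc 0 1) := by
    apply Continuous.continuousOn
    exact (Complex.continuous_exp.comp (continuous_const.mul Complex.continuous_ofReal)).mul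
      (hy'.continuous.sub (continuous_const.mul hy.continuous))
  have hderiv : ∀ x ∈ Set.Ico (0:ℝ) 1, HasDerivWithinAt g 0 (Set.Ici x) x := by
    intro x hx
    have h0 := hode x ⟨hx.1, hx.2.le⟩
    have hE : HasDerivAt (fun t : ℝ => Complex.exp (-m * t))
        (-m * Complex.exp (-m * x)) x := by
      have h1 : HasDerivAt (fun t : ℝ => -m * (t : ℂ)) (-m) x := by
        simpa using ((hasDerivAt_id x).ofReal_comp.const_mul (-m))
      have := h1.cexp
      convert this using 1
      ring
    have h2 : HasDerivAt (fun t => deriv y t - l * y t)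
        (deriv (deriv y) x - l * deriv y x) x :=
      ((hy' x).hasDerivAt).sub (((hy x).hasDerivAt).const_mul l)
    have hgx : HasDerivAt g
        (-m * Complex.exp (-m * x) * (deriv y x - l * y x)
          + Complex.exp (-m * x) * (deriv (deriv y) x - l * deriv y x)) x := hE.mul h2
    have : (-m * Complex.exp (-m * x) * (deriv y x - l * y x)
          + Complex.exp (-m * x) * (deriv (deriv y) x - l * deriv y x)) = 0 := by
      linear_combination (-(Complex.exp (-m * x) / (η:ℂ))) * h0
        - Complex.exp (-m * x) * deriv y x * hsum
        + Complex.exp (-m * x) * y x * hprod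
        - Complex.exp (-m * x) * deriv (deriv y) x * (mul_inv_cancel₀ hηc)
    rw [this] at hgx
    exact hgx.hasDerivWithinAt
  have hc := constant_of_has_deriv_right_zero hcont hderiv 1 (by norm_num)
  have h01 : g 1 = g 0 := hc
  simpa [hg] using h01

theorem stmt_15 (η : ℝ) (hη : 0 < η) (s : ℂ)
    (hsne : 1 + 4 * (η : ℂ) * s ≠ 0)
    (l₁ l₂ : ℂ)
    (hl₁ : l₁ = (1 + (1 + 4 * (η : ℂ) * s) ^ ((1 : ℂ) / 2)) / (2 * (η : ℂ)))
    (hl₂ : l₂ = (1 - (1 + 4 * (η : ℂ) * s) ^ ((1 : ℂ) / 2)) / (2 * (η : ℂ)))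
    (y : ℝ → ℂ)
    (hy : Differentiable ℝ y) (hy' : Differentiable ℝ (deriv y))
    (hode : ∀ x ∈ Set.Icc (0 : ℝ) 1,
      s * y x + deriv y x - (η : ℂ) * deriv (deriv y) x = 0)
    (hbc : deriv y 1 = 0) :
    (l₁ * Complex.exp (-l₂) - l₂ * Complex.exp (-l₁)) * y 1 = (l₁ - l₂) * y 0 := by
  have hηc : (η : ℂ) ≠ 0 := by exact_mod_cast hη.ne'
  have hq : ((1 + 4 * (η : ℂ) * s) ^ ((1 : ℂ) / 2)) ^ 2 = 1 + 4 * (η : ℂ) * s := by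
    have := Complex.cpow_nat_inv_pow (1 + 4 * (η : ℂ) * s) (n := 2) (by norm_num)
    simpa [one_div] using this
  have hsum : l₁ + l₂ = 1 / (η : ℂ) := by
    rw [hl₁, hl₂]; field_simp; norm_num
  have hprod : l₁ * l₂ = -s / (η : ℂ) := by
    rw [hl₁, hl₂]; field_simp
    linear_combination -hq
  have hsum' : l₂ + l₁ = 1 / (η : ℂ) := by rw [add_comm]; exact hsum
  have hprod' : l₂ * l₁ = -s / (η : ℂ) := by rw [mul_comm]; exact hprod
  have h1 := stmt_15_aux η hη s l₁ l₂ hsum hprod y hy hy' hode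
  have h2 := stmt_15_aux η hη s l₂ l₁ hsum' hprod' y hy hy' hode
  rw [hbc] at h1 h2
  linear_combination -h1 + h2
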